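/- The economic gain factor Q_econ is log-log-concave as a function of all ten parameters on ℝ¹⁰₊₊: the map ℓ = (ℓ₁,…,ℓ₁₀) ∈ ℝ¹⁰ ↦ log Q_econ(e^{ℓ₁},…,e^{ℓ₁₀}) is concave on ℝ¹⁰. -/

import Mathlib

/-- The annuity (amortization) factor `φ(i, τL)` with the interest rate `i` in percent. -/
noncomputable def annuity (i tL : ℝ) : ℝ :=
  0.01 * i * (1 + 0.01 * i) ^ tL / ((1 + 0.01 * i) ^ tL - 1)

/-- The utilization factor `U = X / (X + p·τ)`. -/
noncomputable def util (p tau X : ℝ) : ℝ := X / (X + p * tau)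

/-- The economic gain factor `Q_econ` of the fusion power plant model,
with `α = 8.76×10⁻³` and `β = 31.5`. -/
noncomputable def Qecon (p tau tL E X eta cY mS mF i : ℝ) : ℝ :=
  (8.76e-3 * E * eta * p * util p tau X) /
    (31.5 * cY * p * util p tau X + mS * (p / X) * util p tau X + mF * annuity i tL)

/-- `Q_econ` as a function of the vector of the ten parameters
`(p, τ, τL, E, X, η, cY, mS, mF, i)`. -/
noncomputable def QeconV (θ : Fin 10 → ℝ) : ℝ :=
  Qecon (θ 0) (θ 1) (θ 2) (θ 3) (θ 4) (θ 5) (θ 6) (θ 7) (θ 8) (θ 9)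

namespace QeconAux
open Real Set

lemma one_lt_exp' {x : ℝ} (h : 0 < x) : 1 < Real.exp x := by
  rw [← Real.exp_zero]; exact Real.exp_lt_exp.mpr h

/-! ### The convex, antitone function `h(u) = -log (1 - e^{-eᵘ})` -/

noncomputable def hfun (u : ℝ) : ℝ := -Real.log (1 - Real.exp (-Real.exp u))

lemma one_sub_pos (u : ℝ) : 0 < 1 - exp (-exp u) := by
  have h : exp (-exp u) < 1 := exp_lt_one_iff.mpr (neg_neg_iff_pos.mpr (exp_pos u))
  linarith

lemma hfun_hasDeriv (u : ℝ) :
    HasDerivAt hfun (-(exp u / (exp (exp u) - 1))) u := by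
  have h1 : HasDerivAt (fun u : ℝ => -exp u) (-exp u) u := (Real.hasDerivAt_exp u).neg
  have h2 : HasDerivAt (fun u : ℝ => exp (-exp u)) (exp (-exp u) * (-exp u)) u := h1.exp
  have h3 : HasDerivAt (fun u : ℝ => 1 - exp (-exp u)) (-(exp (-exp u) * (-exp u))) u :=
    h2.const_sub 1
  have h4 : HasDerivAt hfun (-(-(exp (-exp u) * -exp u) / (1 - exp (-exp u)))) u :=
    (h3.log (ne_of_gt (one_sub_pos u))).neg
  convert h4 using 1
  have hE1 : (1:ℝ) < exp (exp u) := one_lt_exp' (exp_pos u)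
  rw [exp_neg]
  have hE : exp (exp u) ≠ 0 := (exp_pos _).ne'
  have hE1' : exp (exp u) - 1 ≠ 0 := by linarith
  field_simp

lemma hfun_diff : Differentiable ℝ hfun := fun u => (hfun_hasDeriv u).differentiableAt

lemma hfun_deriv (u : ℝ) : deriv hfun u = -(exp u / (exp (exp u) - 1)) :=
  (hfun_hasDeriv u).deriv

lemma expratio_mono {s t : ℝ} (hs : 0 < s) (hst : s ≤ t) :
    t * (exp s - 1) ≤ s * (exp t - 1) := by
  have ht : 0 < t := lt_of_lt_of_le hs hst
  have h := convexOn_exp.secant_mono (a := 0) (x := s) (y := t)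
    (mem_univ _) (mem_univ _) (mem_univ _) hs.ne' ht.ne' hst
  rw [exp_zero, sub_zero, sub_zero, div_le_div_iff₀ hs ht] at h
  nlinarith [h]

lemma hfun_deriv_mono : Monotone (deriv hfun) := by
  intro u v huv
  rw [hfun_deriv, hfun_deriv]
  have hEu : (0:ℝ) < exp (exp u) - 1 := by linarith [one_lt_exp' (exp_pos u)]
  have hEv : (0:ℝ) < exp (exp v) - 1 := by linarith [one_lt_exp' (exp_pos v)]
  rw [neg_le_neg_iff, div_le_div_iff₀ hEv hEu]
  have := expratio_mono (exp_pos u) (exp_le_exp.mpr huv)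
  nlinarith [this]

lemma hfun_convex : ConvexOn ℝ univ hfun :=
  MonotoneOn.convexOn_of_deriv convex_univ hfun_diff.continuous.continuousOn
    hfun_diff.differentiableOn (by rw [interior_univ]; exact hfun_deriv_mono.monotoneOn _)

lemma hfun_anti : Antitone hfun := by
  apply antitone_of_deriv_nonpos hfun_diff
  intro u
  rw [hfun_deriv]
  have hEu : (0:ℝ) < exp (exp u) - 1 := by linarith [one_lt_exp' (exp_pos u)]
  have := exp_pos u
  have : 0 ≤ exp u / (exp (exp u) - 1) := by positivity
  linarith

/-! ### The concave function `a(x) = log (log (1 + 0.01 eˣ))` -/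

noncomputable def afun (x : ℝ) : ℝ := Real.log (Real.log (1 + 0.01 * Real.exp x))

lemma base_gt_one (x : ℝ) : 1 < 1 + 0.01 * exp x := by nlinarith [exp_pos x]

lemma loga_pos (x : ℝ) : 0 < log (1 + 0.01 * exp x) := log_pos (base_gt_one x)

lemma afun_hasDeriv (x : ℝ) :
    HasDerivAt afun
      (0.01 * exp x / ((1 + 0.01 * exp x) * log (1 + 0.01 * exp x))) x := by
  have h1 : HasDerivAt (fun x : ℝ => 1 + 0.01 * exp x) (0.01 * exp x) x :=
    ((Real.hasDerivAt_exp x).const_mul 0.01).const_add 1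
  have hb : (0:ℝ) < 1 + 0.01 * exp x := by nlinarith [exp_pos x]
  have h2 := h1.log hb.ne'
  have h3 : HasDerivAt afun (0.01 * exp x / (1 + 0.01 * exp x) / log (1 + 0.01 * exp x)) x :=
    h2.log (loga_pos x).ne'
  convert h3 using 1
  rw [div_div]

lemma afun_diff : Differentiable ℝ afun := fun x => (afun_hasDeriv x).differentiableAt

lemma afun_deriv (x : ℝ) :
    deriv afun x = 0.01 * exp x / ((1 + 0.01 * exp x) * log (1 + 0.01 * exp x)) :=
  (afun_hasDeriv x).deriv

lemma mullog_convex : ConvexOn ℝ (Ici 0) (fun w : ℝ => (1 + w) * log (1 + w)) := by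
  refine ⟨convex_Ici 0, ?_⟩
  intro x hx y hy a b ha hb hab
  have hx' : (0:ℝ) ≤ 1 + x := by have := mem_Ici.mp hx; linarith
  have hy' : (0:ℝ) ≤ 1 + y := by have := mem_Ici.mp hy; linarith
  have key := convexOn_mul_log.2 (mem_Ici.mpr hx') (mem_Ici.mpr hy') ha hb hab
  simp only [smul_eq_mul] at key ⊢
  have e : 1 + (a * x + b * y) = a * (1 + x) + b * (1 + y) := by linarith
  rw [e]; exact key

lemma afun_deriv_anti : Antitone (deriv afun) := by
  intro x y hxy
  rw [afun_deriv, afun_deriv]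
  set w1 := 0.01 * exp x with hw1def
  set w2 := 0.01 * exp y with hw2def
  have hw1 : 0 < w1 := by positivity
  have hw2 : 0 < w2 := by positivity
  have hw12 : w1 ≤ w2 := by
    rw [hw1def, hw2def]
    nlinarith [exp_le_exp.mpr hxy]
  have hl1 : 0 < log (1 + w1) := loga_pos x
  have hl2 : 0 < log (1 + w2) := loga_pos y
  have hd1 : 0 < (1 + w1) * log (1 + w1) := by positivity
  have hd2 : 0 < (1 + w2) * log (1 + w2) := by positivity
  rw [div_le_div_iff₀ hd2 hd1]
  have hsec := mullog_convex.secant_mono (a := 0) (x := w1) (y := w2)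
    (mem_Ici.mpr le_rfl) (mem_Ici.mpr hw1.le) (mem_Ici.mpr hw2.le) hw1.ne' hw2.ne' hw12
  simp only [add_zero, log_one, mul_zero, sub_zero] at hsec
  rw [div_le_div_iff₀ hw1 hw2] at hsec
  nlinarith [hsec]

lemma afun_concave : ConcaveOn ℝ univ afun :=
  AntitoneOn.concaveOn_of_deriv convex_univ afun_diff.continuous.continuousOn
    afun_diff.differentiableOn (by rw [interior_univ]; exact afun_deriv_anti.antitoneOn _)

/-! ### Helpers on `Fin 10 → ℝ` -/

lemma convexOn_coord (j : Fin 10) : ConvexOn ℝ univ (fun ℓ : Fin 10 → ℝ => ℓ j) :=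
  ⟨convex_univ, fun x _ y _ a b _ _ _ => le_of_eq (by simp)⟩

lemma concaveOn_coord (j : Fin 10) : ConcaveOn ℝ univ (fun ℓ : Fin 10 → ℝ => ℓ j) :=
  ⟨convex_univ, fun x _ y _ a b _ _ _ => le_of_eq (by simp)⟩

lemma convexOn_comp_coord {φ : ℝ → ℝ} (hφ : ConvexOn ℝ univ φ) (j : Fin 10) :
    ConvexOn ℝ univ (fun ℓ : Fin 10 → ℝ => φ (ℓ j)) :=
  ⟨convex_univ, fun x _ y _ a b ha hb hab => by
    simpa [smul_eq_mul] using hφ.2 (mem_univ (x j)) (mem_univ (y j)) ha hb hab⟩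

lemma concaveOn_comp_coord {φ : ℝ → ℝ} (hφ : ConcaveOn ℝ univ φ) (j : Fin 10) :
    ConcaveOn ℝ univ (fun ℓ : Fin 10 → ℝ => φ (ℓ j)) :=
  ⟨convex_univ, fun x _ y _ a b ha hb hab => by
    simpa [smul_eq_mul] using hφ.2 (mem_univ (x j)) (mem_univ (y j)) ha hb hab⟩

lemma convexOn_comp_antitone {k : (Fin 10 → ℝ) → ℝ} (hk : ConcaveOn ℝ univ k)
    {φ : ℝ → ℝ} (hφ : ConvexOn ℝ univ φ) (hm : Antitone φ) :
    ConvexOn ℝ univ (fun ℓ => φ (k ℓ)) := by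
  refine ⟨convex_univ, fun x _ y _ a b ha hb hab => ?_⟩
  calc φ (k (a • x + b • y)) ≤ φ (a • k x + b • k y) :=
        hm (hk.2 (mem_univ x) (mem_univ y) ha hb hab)
    _ ≤ a • φ (k x) + b • φ (k y) := hφ.2 (mem_univ _) (mem_univ _) ha hb hab

lemma convex_transfer {f g : (Fin 10 → ℝ) → ℝ} (hf : ConvexOn ℝ univ f)
    (h : ∀ x, f x = g x) : ConvexOn ℝ univ g := (funext h : f = g) ▸ hf

lemma concave_transfer {f g : (Fin 10 → ℝ) → ℝ} (hf : ConcaveOn ℝ univ f)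
    (h : ∀ x, f x = g x) : ConcaveOn ℝ univ g := (funext h : f = g) ▸ hf

/-! ### Sums of log-convex functions are log-convex -/

lemma rpow_combo {fx fy A B : ℝ} (hfx : 0 < fx) (hfy : 0 < fy) (hA : 0 < A) (hB : 0 < B)
    {a b : ℝ} (ha : 0 ≤ a) (hb : 0 ≤ b) (hab : a + b = 1) :
    fx ^ a * fy ^ b ≤ A ^ a * B ^ b * (a * (fx / A) + b * (fy / B)) := by
  have h2 := Real.geom_mean_le_arith_mean2_weighted ha hb
    (div_nonneg hfx.le hA.le) (div_nonneg hfy.le hB.le) hab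
  have key : fx ^ a * fy ^ b = A ^ a * B ^ b * ((fx / A) ^ a * (fy / B) ^ b) := by
    rw [Real.div_rpow hfx.le hA.le, Real.div_rpow hfy.le hB.le]
    have h1 : A ^ a ≠ 0 := (Real.rpow_pos_of_pos hA a).ne'
    have h3 : B ^ b ≠ 0 := (Real.rpow_pos_of_pos hB b).ne'
    field_simp
  rw [key]
  have hC : (0:ℝ) ≤ A ^ a * B ^ b := by positivity
  exact mul_le_mul_of_nonneg_left h2 hC

lemma holder2 {fx fy gx gy a b : ℝ} (hfx : 0 < fx) (hfy : 0 < fy) (hgx : 0 < gx)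
    (hgy : 0 < gy) (ha : 0 ≤ a) (hb : 0 ≤ b) (hab : a + b = 1) :
    fx ^ a * fy ^ b + gx ^ a * gy ^ b ≤ (fx + gx) ^ a * (fy + gy) ^ b := by
  have hA : 0 < fx + gx := by linarith
  have hB : 0 < fy + gy := by linarith
  have k1 := rpow_combo hfx hfy hA hB ha hb hab
  have k2 := rpow_combo hgx hgy hA hB ha hb hab
  have h1 : a * (fx / (fx + gx)) + b * (fy / (fy + gy)) +
      (a * (gx / (fx + gx)) + b * (gy / (fy + gy))) = 1 := by
    field_simp
    linear_combination ((fx + gx) * (fy + gy)) * hab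
  nlinarith [k1, k2, h1, Real.rpow_pos_of_pos hA a, Real.rpow_pos_of_pos hB b,
    mul_pos (Real.rpow_pos_of_pos hA a) (Real.rpow_pos_of_pos hB b)]

lemma logconvex_add {f g : (Fin 10 → ℝ) → ℝ} (hf0 : ∀ x, 0 < f x) (hg0 : ∀ x, 0 < g x)
    (hf : ConvexOn ℝ univ (fun x => log (f x)))
    (hg : ConvexOn ℝ univ (fun x => log (g x))) :
    ConvexOn ℝ univ (fun x => log (f x + g x)) := by
  refine ⟨convex_univ, fun x _ y _ a b ha hb hab => ?_⟩
  have hfz : f (a • x + b • y) ≤ f x ^ a * f y ^ b := by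
    have h1 : log (f (a • x + b • y)) ≤ a * log (f x) + b * log (f y) := by
      simpa [smul_eq_mul] using hf.2 (mem_univ x) (mem_univ y) ha hb hab
    calc f (a • x + b • y) = exp (log (f (a • x + b • y))) := (exp_log (hf0 _)).symm
      _ ≤ exp (a * log (f x) + b * log (f y)) := exp_le_exp.mpr h1
      _ = f x ^ a * f y ^ b := by
          rw [exp_add, mul_comm a, mul_comm b, ← rpow_def_of_pos (hf0 x),
            ← rpow_def_of_pos (hf0 y)]
  have hgz : g (a • x + b • y) ≤ g x ^ a * g y ^ b := by
    have h1 : log (g (a • x + b • y)) ≤ a * log (g x) + b * log (g y) := by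
      simpa [smul_eq_mul] using hg.2 (mem_univ x) (mem_univ y) ha hb hab
    calc g (a • x + b • y) = exp (log (g (a • x + b • y))) := (exp_log (hg0 _)).symm
      _ ≤ exp (a * log (g x) + b * log (g y)) := exp_le_exp.mpr h1
      _ = g x ^ a * g y ^ b := by
          rw [exp_add, mul_comm a, mul_comm b, ← rpow_def_of_pos (hg0 x),
            ← rpow_def_of_pos (hg0 y)]
  have hsum : f (a • x + b • y) + g (a • x + b • y) ≤ (f x + g x) ^ a * (f y + g y) ^ b :=
    (add_le_add hfz hgz).trans (holder2 (hf0 x) (hf0 y) (hg0 x) (hg0 y) ha hb hab)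
  have hzpos : 0 < f (a • x + b • y) + g (a • x + b • y) := add_pos (hf0 _) (hg0 _)
  have hApos : 0 < f x + g x := add_pos (hf0 x) (hg0 x)
  have hBpos : 0 < f y + g y := add_pos (hf0 y) (hg0 y)
  calc log (f (a • x + b • y) + g (a • x + b • y))
      ≤ log ((f x + g x) ^ a * (f y + g y) ^ b) :=
        Real.log_le_log hzpos hsum
    _ = a • log (f x + g x) + b • log (f y + g y) := by
        rw [Real.log_mul (Real.rpow_pos_of_pos hApos a).ne' (Real.rpow_pos_of_pos hBpos b).ne',
          Real.log_rpow hApos, Real.log_rpow hBpos]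
        simp [smul_eq_mul]

/-! ### The annuity factor in log coordinates -/

noncomputable def Ffun (ℓ : Fin 10 → ℝ) : ℝ := annuity (Real.exp (ℓ 9)) (Real.exp (ℓ 2))

lemma Ffun_eq (ℓ : Fin 10 → ℝ) :
    Ffun ℓ = 0.01 * exp (ℓ 9) * (1 - exp (-exp (ℓ 2 + afun (ℓ 9))))⁻¹ := by
  have hb : (0:ℝ) < 1 + 0.01 * exp (ℓ 9) := by positivity
  have hR : (1 + 0.01 * exp (ℓ 9)) ^ (exp (ℓ 2)) = exp (exp (ℓ 2 + afun (ℓ 9))) := by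
    rw [rpow_def_of_pos hb]
    congr 1
    rw [exp_add, show afun (ℓ 9) = log (log (1 + 0.01 * exp (ℓ 9))) from rfl,
      exp_log (loga_pos (ℓ 9))]
    ring
  show 0.01 * exp (ℓ 9) * (1 + 0.01 * exp (ℓ 9)) ^ (exp (ℓ 2)) /
      ((1 + 0.01 * exp (ℓ 9)) ^ (exp (ℓ 2)) - 1) = _
  rw [hR]
  have hR1 : 1 < exp (exp (ℓ 2 + afun (ℓ 9))) := one_lt_exp' (exp_pos _)
  rw [exp_neg]
  have h0 : exp (exp (ℓ 2 + afun (ℓ 9))) ≠ 0 := (exp_pos _).ne'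
  have h1 : exp (exp (ℓ 2 + afun (ℓ 9))) - 1 ≠ 0 := by linarith
  field_simp

lemma Ffun_pos (ℓ : Fin 10 → ℝ) : 0 < Ffun ℓ := by
  rw [Ffun_eq]
  have h := one_sub_pos (ℓ 2 + afun (ℓ 9))
  positivity

lemma log_Ffun (ℓ : Fin 10 → ℝ) :
    log (Ffun ℓ) = log 0.01 + ℓ 9 + hfun (ℓ 2 + afun (ℓ 9)) := by
  have h := one_sub_pos (ℓ 2 + afun (ℓ 9))
  rw [Ffun_eq, log_mul (by positivity) (inv_ne_zero h.ne'),
    log_mul (by norm_num) (exp_ne_zero _), log_exp, log_inv]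
  rfl

lemma logF_convex : ConvexOn ℝ univ (fun ℓ : Fin 10 → ℝ => log (Ffun ℓ)) := by
  have k_conc : ConcaveOn ℝ univ (fun ℓ : Fin 10 → ℝ => ℓ 2 + afun (ℓ 9)) :=
    (concaveOn_coord 2).add (concaveOn_comp_coord afun_concave 9)
  have hcomp := convexOn_comp_antitone k_conc hfun_convex hfun_anti
  have c3 := ((convexOn_coord 9).add hcomp).add_const (log 0.01)
  exact convex_transfer c3 (fun ℓ => by
    simp only [Pi.add_apply]
    rw [log_Ffun]; ring)

/-! ### The denominator and its log-convexity -/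

noncomputable def Dfun (ℓ : Fin 10 → ℝ) : ℝ :=
  31.5 * exp (ℓ 6 + (ℓ 0 + ℓ 4)) +
    (exp (ℓ 7 + ℓ 0) + (exp (ℓ 8 + ℓ 4) * Ffun ℓ + exp (ℓ 8 + (ℓ 0 + ℓ 1)) * Ffun ℓ))

lemma Dfun_pos (ℓ : Fin 10 → ℝ) : 0 < Dfun ℓ := by
  have h := Ffun_pos ℓ
  unfold Dfun
  positivity

lemma logD_convex : ConvexOn ℝ univ (fun ℓ : Fin 10 → ℝ => log (Dfun ℓ)) := by
  have l1 : ConvexOn ℝ univ (fun ℓ : Fin 10 → ℝ => log (31.5 * exp (ℓ 6 + (ℓ 0 + ℓ 4)))) := by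
    have c := (((convexOn_coord 6).add ((convexOn_coord 0).add (convexOn_coord 4)))).add_const
      (log 31.5)
    exact convex_transfer c (fun ℓ => by
      simp only [Pi.add_apply]
      rw [log_mul (by norm_num) (exp_ne_zero _), log_exp]
      ring)
  have l2 : ConvexOn ℝ univ (fun ℓ : Fin 10 → ℝ => log (exp (ℓ 7 + ℓ 0))) := by
    have c := (convexOn_coord 7).add (convexOn_coord 0)
    exact convex_transfer c (fun ℓ => by simp only [Pi.add_apply]; rw [log_exp])
  have l3 : ConvexOn ℝ univ (fun ℓ : Fin 10 → ℝ => log (exp (ℓ 8 + ℓ 4) * Ffun ℓ)) := by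
    have c := ((convexOn_coord 8).add (convexOn_coord 4)).add logF_convex
    exact convex_transfer c (fun ℓ => by
      simp only [Pi.add_apply]
      rw [log_mul (exp_ne_zero _) (Ffun_pos ℓ).ne', log_exp])
  have l4 : ConvexOn ℝ univ
      (fun ℓ : Fin 10 → ℝ => log (exp (ℓ 8 + (ℓ 0 + ℓ 1)) * Ffun ℓ)) := by
    have c := ((convexOn_coord 8).add ((convexOn_coord 0).add (convexOn_coord 1))).add logF_convex
    exact convex_transfer c (fun ℓ => by
      simp only [Pi.add_apply]
      rw [log_mul (exp_ne_zero _) (Ffun_pos ℓ).ne', log_exp])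
  have p1 : ∀ ℓ : Fin 10 → ℝ, (0:ℝ) < 31.5 * exp (ℓ 6 + (ℓ 0 + ℓ 4)) := fun ℓ => by positivity
  have p2 : ∀ ℓ : Fin 10 → ℝ, (0:ℝ) < exp (ℓ 7 + ℓ 0) := fun ℓ => exp_pos _
  have p3 : ∀ ℓ : Fin 10 → ℝ, (0:ℝ) < exp (ℓ 8 + ℓ 4) * Ffun ℓ :=
    fun ℓ => mul_pos (exp_pos _) (Ffun_pos ℓ)
  have p4 : ∀ ℓ : Fin 10 → ℝ, (0:ℝ) < exp (ℓ 8 + (ℓ 0 + ℓ 1)) * Ffun ℓ :=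
    fun ℓ => mul_pos (exp_pos _) (Ffun_pos ℓ)
  have l34 := logconvex_add p3 p4 l3 l4
  have l234 := logconvex_add p2 (fun ℓ => add_pos (p3 ℓ) (p4 ℓ)) l2 l34
  have lD := logconvex_add p1 (fun ℓ => add_pos (p2 ℓ) (add_pos (p3 ℓ) (p4 ℓ))) l1 l234
  exact lD

/-! ### The algebraic identity -/

lemma qecon_eq {p tau E X eta cY mS mF F : ℝ} (hp : 0 < p) (htau : 0 < tau)
    (hE : 0 < E) (hX : 0 < X) (heta : 0 < eta) (hcY : 0 < cY) (hmS : 0 < mS)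
    (hmF : 0 < mF) (hF : 0 < F) :
    8.76e-3 * E * eta * p * (X / (X + p * tau)) /
      (31.5 * cY * p * (X / (X + p * tau)) + mS * (p / X) * (X / (X + p * tau)) + mF * F)
    = 8.76e-3 * (E * (eta * (p * X))) /
      (31.5 * (cY * (p * X)) + (mS * p + (mF * X * F + mF * (p * tau) * F))) := by
  have hXt : 0 < X + p * tau := by positivity
  have hU : 0 < X / (X + p * tau) := div_pos hX hXt
  have t1 : 0 < 31.5 * cY * p * (X / (X + p * tau)) := by
    have h31 : (0:ℝ) < 31.5 := by norm_num
    exact mul_pos (mul_pos (mul_pos h31 hcY) hp) hU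
  have t2 : 0 < mS * (p / X) * (X / (X + p * tau)) :=
    mul_pos (mul_pos hmS (div_pos hp hX)) hU
  have t3 : 0 < mF * F := mul_pos hmF hF
  have hden1 : 0 < 31.5 * cY * p * (X / (X + p * tau)) +
      mS * (p / X) * (X / (X + p * tau)) + mF * F := by linarith
  have hden2 : 0 < 31.5 * (cY * (p * X)) + (mS * p + (mF * X * F + mF * (p * tau) * F)) := by
    have h31 : (0:ℝ) < 31.5 := by norm_num
    have a1 : 0 < 31.5 * (cY * (p * X)) := mul_pos h31 (mul_pos hcY (mul_pos hp hX))
    have a2 : 0 < mS * p := mul_pos hmS hp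
    have a3 : 0 < mF * X * F := mul_pos (mul_pos hmF hX) hF
    have a4 : 0 < mF * (p * tau) * F := mul_pos (mul_pos hmF (mul_pos hp htau)) hF
    linarith
  rw [div_eq_div_iff hden1.ne' hden2.ne']
  field_simp
  ring

end QeconAux

open Real Set QeconAux in
/-- **Log-log-concavity of `Q_econ`.** The map
`ℓ = (ℓ₁,…,ℓ₁₀) ↦ log Q_econ(e^{ℓ₁},…,e^{ℓ₁₀})` is concave on `ℝ¹⁰`. -/
theorem qecon_logLogConcave :
    ConcaveOn ℝ Set.univ
      (fun ℓ : Fin 10 → ℝ => Real.log (QeconV (fun j => Real.exp (ℓ j)))) := by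
  have key : ∀ ℓ : Fin 10 → ℝ,
      Real.log (QeconV (fun j => Real.exp (ℓ j))) =
        (Real.log 8.76e-3 + (ℓ 3 + (ℓ 5 + (ℓ 0 + ℓ 4)))) - Real.log (Dfun ℓ) := by
    intro ℓ
    have identity : QeconV (fun j => Real.exp (ℓ j)) =
        8.76e-3 * Real.exp (ℓ 3 + (ℓ 5 + (ℓ 0 + ℓ 4))) / Dfun ℓ := by
      simp only [QeconV, Qecon, util, Dfun, Real.exp_add]
      rw [show annuity (Real.exp (ℓ 9)) (Real.exp (ℓ 2)) = Ffun ℓ from rfl]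
      exact qecon_eq (exp_pos _) (exp_pos _) (exp_pos _) (exp_pos _) (exp_pos _)
        (exp_pos _) (exp_pos _) (exp_pos _) (Ffun_pos ℓ)
    rw [identity, Real.log_div (by positivity) (Dfun_pos ℓ).ne',
      Real.log_mul (by norm_num) (Real.exp_ne_zero _), Real.log_exp]
  have hlin : ConcaveOn ℝ Set.univ
      (fun ℓ : Fin 10 → ℝ => ℓ 3 + (ℓ 5 + (ℓ 0 + ℓ 4))) :=
    (concaveOn_coord 3).add ((concaveOn_coord 5).add
      ((concaveOn_coord 0).add (concaveOn_coord 4)))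
  have hconc := (hlin.add_const (Real.log 8.76e-3)).add logD_convex.neg
  refine concave_transfer (concave_transfer hconc ?_) (fun ℓ => (key ℓ).symm)
  intro ℓ
  simp only [Pi.add_apply, Pi.neg_apply]
  ring
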